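/- For every n ≥ 3, the minimum number of LRE moves needed to sort the reverse permutation R_n is at most 3n²/4; that is, there exists k with 4k ≤ 3n² such that R_n is a product of k elements of G. -/

import Mathlib

set_option maxHeartbeats 1000000

namespace SortReverseAux

def Kle {n : ℕ} (σ τ x : Equiv.Perm (Fin n)) (c : ℕ) : Prop :=
  ∃ gs : List (Equiv.Perm (Fin n)),
    gs.length ≤ c ∧ (∀ g ∈ gs, g = σ ∨ g = σ⁻¹ ∨ g = τ) ∧ gs.prod = x

theorem kle_one {n : ℕ} (σ τ : Equiv.Perm (Fin n)) : Kle σ τ 1 0 :=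
  ⟨[], le_rfl, by simp, rfl⟩

theorem kle_sigma {n : ℕ} (σ τ : Equiv.Perm (Fin n)) : Kle σ τ σ 1 :=
  ⟨[σ], by simp, by intro g hg; rw [List.mem_singleton] at hg; exact Or.inl hg, by simp⟩

theorem kle_sigma_inv {n : ℕ} (σ τ : Equiv.Perm (Fin n)) : Kle σ τ σ⁻¹ 1 :=
  ⟨[σ⁻¹], by simp, by intro g hg; rw [List.mem_singleton] at hg; exact Or.inr (Or.inl hg), by simp⟩

theorem kle_tau {n : ℕ} (σ τ : Equiv.Perm (Fin n)) : Kle σ τ τ 1 :=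
  ⟨[τ], by simp, by intro g hg; rw [List.mem_singleton] at hg; exact Or.inr (Or.inr hg), by simp⟩

theorem kle_mul {n : ℕ} {σ τ x y : Equiv.Perm (Fin n)} {c d : ℕ}
    (hx : Kle σ τ x c) (hy : Kle σ τ y d) : Kle σ τ (x * y) (c + d) := by
  obtain ⟨gs, h1, h2, h3⟩ := hx
  obtain ⟨gs', k1, k2, k3⟩ := hy
  refine ⟨gs ++ gs', ?_, ?_, ?_⟩
  · simpa using Nat.add_le_add h1 k1
  · intro g hg
    rcases List.mem_append.1 hg with h | h
    · exact h2 g h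
    · exact k2 g h
  · rw [List.prod_append, h3, k3]

theorem kle_mono {n : ℕ} {σ τ x : Equiv.Perm (Fin n)} {c d : ℕ}
    (hx : Kle σ τ x c) (hcd : c ≤ d) : Kle σ τ x d := by
  obtain ⟨gs, h1, h2, h3⟩ := hx
  exact ⟨gs, h1.trans hcd, h2, h3⟩

theorem kle_pow {n : ℕ} (σ τ : Equiv.Perm (Fin n)) (k : ℕ) : Kle σ τ (σ ^ k) k :=
  ⟨List.replicate k σ, by simp, fun g hg => Or.inl (List.eq_of_mem_replicate hg),
    List.prod_replicate k σ⟩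

theorem costBound (n t : ℕ) (hn : 4 ≤ n) (ht : t = (n + 1) / 4) :
    4 * ((n - t) + ((2*((2*t-1)*(2*t-1)) + 3*(2*t-1))/2 - (2*t-1)%2) + 2*t +
        ((2*((n-1-2*t)*(n-1-2*t)) + 3*(n-1-2*t))/2 - (n-1-2*t)%2) + (n - t)) ≤ 3 * n ^ 2 := by
  rcases le_or_gt n 13 with hsmall | hlarge
  · interval_cases n <;> (norm_num at ht; subst ht; decide)
  · obtain ⟨a, ha⟩ : ∃ a, a = 2*t-1 := ⟨_, rfl⟩
    obtain ⟨b, hb⟩ : ∃ b, b = n-1-2*t := ⟨_, rfl⟩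
    obtain ⟨c, hc⟩ : ∃ c, c = n-t := ⟨_, rfl⟩
    rw [← ha, ← hb, ← hc]
    have haa : 2*t = a + 1 := by omega
    have hbb : n = 2*t + b + 1 := by omega
    have hcc : n = t + c := by omega
    have hn2 : n = a + b + 2 := by omega
    have h5a : 5 ≤ a := by omega
    have h5b : 5 ≤ b := by omega
    have hab1 : a ≤ b + 1 := by omega
    have hab2 : b ≤ a + 2 := by omega
    obtain ⟨p, hp⟩ : ∃ p, p = a*a := ⟨_, rfl⟩
    obtain ⟨q, hq⟩ : ∃ q, q = b*b := ⟨_, rfl⟩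
    rw [← hp, ← hq]
    obtain ⟨c1, hc1⟩ : ∃ c1, c1 = (2*p + 3*a)/2 - a%2 := ⟨_, rfl⟩
    obtain ⟨c2, hc2⟩ : ∃ c2, c2 = (2*q + 3*b)/2 - b%2 := ⟨_, rfl⟩
    rw [← hc1, ← hc2]
    have e1 : 2*c1 ≤ 2*p + 3*a := by omega
    have e2 : 2*c2 ≤ 2*q + 3*b := by omega
    have r1 : p ≤ a*b + a := by
      rw [hp]
      calc a*a ≤ a*(b+1) := Nat.mul_le_mul (le_refl a) hab1
        _ = a*b + a := by ring
    have r2 : q ≤ a*b + 2*b := by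
      rw [hq]
      calc b*b ≤ b*(a+2) := Nat.mul_le_mul (le_refl b) hab2
        _ = a*b + 2*b := by ring
    have r3 : 5*b ≤ a*b := Nat.mul_le_mul h5a (le_refl b)
    have r4 : 5*a ≤ a*b := by
      calc 5*a ≤ b*a := Nat.mul_le_mul h5b (le_refl a)
        _ = a*b := by ring
    have r5 : n^2 = p + q + 2*(a*b) + 4*a + 4*b + 4 := by rw [hp, hq, hn2]; ring
    linarith

end SortReverseAux

open SortReverseAux in
/-- For every `n ≥ 3`, the minimum number of LRE moves needed to sort the reverse
permutation `R_n` is at most `3n²/4`: there is a `k` with `4k ≤ 3n²` such that `R_n` is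
a product of `k` elements of `G = {σ, σ⁻¹, τ}`.  Permutations of `{1,…,n}` are modelled
as `Equiv.Perm (Fin n)` with `i : Fin n` representing the 1-based index `(i : ℕ) + 1`:
`σ` is the left-rotation, `τ` the transposition of the first two positions, and
`R = R_n` sends `i ↦ n + 1 - i`. -/
theorem sort_reverse_upper_bound_tight (n : ℕ) (hn : 3 ≤ n)
    (σ τ R : Equiv.Perm (Fin n))
    (hσ : ∀ i : Fin n, (σ i : ℕ) = ((i : ℕ) + 1) % n)
    (hτ : ∀ i : Fin n, (τ i : ℕ) =
      if (i : ℕ) = 0 then 1 else if (i : ℕ) = 1 then 0 else (i : ℕ))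
    (hR : ∀ i : Fin n, (R i : ℕ) = n - 1 - (i : ℕ)) :
    ∃ k : ℕ, 4 * k ≤ 3 * n ^ 2 ∧
      ∃ gs : List (Equiv.Perm (Fin n)),
        gs.length = k ∧
        (∀ g ∈ gs, g = σ ∨ g = σ⁻¹ ∨ g = τ) ∧
        gs.prod = R := by
  have hs : ∀ i : Fin n, (σ i : ℕ) = if (i:ℕ) + 1 = n then 0 else (i:ℕ)+1 := by
    intro i
    rw [hσ i]
    have := i.2
    split_ifs with h
    · rw [h, Nat.mod_self]
    · exact Nat.mod_eq_of_lt (by omega)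
  have hsi : ∀ i : Fin n, (σ⁻¹ i : ℕ) = if (i:ℕ) = 0 then n - 1 else (i:ℕ) - 1 := by
    intro i
    have h1 : σ (σ⁻¹ i) = i := by simp
    have h2 := hs (σ⁻¹ i)
    have b1 := (σ⁻¹ i).2
    have bi := i.2
    rw [h1] at h2
    split_ifs at h2 ⊢ <;> omega
  rcases Nat.eq_or_lt_of_le hn with h3 | h4
  · -- n = 3
    subst h3
    refine ⟨2, by norm_num, [σ, τ], rfl, ?_, ?_⟩
    · intro g hg
      simp only [List.mem_cons, List.mem_singleton, List.not_mem_nil, or_false] at hg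
      rcases hg with rfl | rfl
      · exact Or.inl rfl
      · exact Or.inr (Or.inr rfl)
    · have hval : ∀ i : Fin 3, ((σ * τ) i : ℕ) = (R i : ℕ) := by
        intro i
        rw [Equiv.Perm.mul_apply]
        have e1 := hτ i
        have e2 := hs (τ i)
        have e3 := hR i
        have bi := i.2
        have b1 := (τ i).2
        rw [e3]
        split_ifs at e1 e2 <;> omega
      have : σ * τ = R := Equiv.ext fun i => Fin.val_injective (hval i)
      simpa using this
  · -- n ≥ 4
    have hn4 : 4 ≤ n := h4
    have hpow : ∀ k, k ≤ n → ∀ i : Fin n,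
        ((σ ^ k) i : ℕ) = if (i:ℕ) + k < n then (i:ℕ) + k else (i:ℕ) + k - n := by
      intro k
      induction k with
      | zero =>
        intro _ i
        have := i.2
        simp only [pow_zero, Equiv.Perm.one_apply]
        split_ifs <;> omega
      | succ m ih =>
        intro hm i
        rw [pow_succ, Equiv.Perm.mul_apply]
        have e1 := hs i
        have e2 := ih (by omega) (σ i)
        have b1 := (σ i).2
        have bi := i.2
        split_ifs at e1 e2 ⊢ <;> omega
    have exA : ∀ l, 1 ≤ l → l + 1 ≤ n →
        ∃ a : Equiv.Perm (Fin n),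
          (∀ i : Fin n, (a i : ℕ) =
            if (i:ℕ) = 0 then l else if (i:ℕ) = l then 0 else (i:ℕ)) ∧
          Kle σ τ a (4 * l - 3) := by
      intro l
      induction l with
      | zero => intro h; exact absurd h (by omega)
      | succ m ih =>
        intro _ hmn
        rcases Nat.eq_zero_or_pos m with rfl | hm
        · refine ⟨τ, fun i => ?_, kle_mono (kle_tau σ τ) (by omega)⟩
          simpa using hτ i
        · obtain ⟨a, ha, hka⟩ := ih hm (by omega)
          refine ⟨τ * σ * a * σ⁻¹ * τ, fun i => ?_, ?_⟩
          · simp only [Equiv.Perm.mul_apply]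
            have bi := i.2
            have e1 := hτ i
            have b1 := (τ i).2
            have e2 := hsi (τ i)
            have b2 := (σ⁻¹ (τ i)).2
            have e3 := ha (σ⁻¹ (τ i))
            have b3 := (a (σ⁻¹ (τ i))).2
            have e4 := hs (a (σ⁻¹ (τ i)))
            have b4 := (σ (a (σ⁻¹ (τ i)))).2
            have e5 := hτ (σ (a (σ⁻¹ (τ i))))
            split_ifs at e1 e2 e3 e4 e5 ⊢ <;> omega
          · have h := kle_mul (kle_mul (kle_mul (kle_mul (kle_tau σ τ) (kle_sigma σ τ)) hka)
              (kle_sigma_inv σ τ)) (kle_tau σ τ)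
            exact kle_mono h (by omega)
    have exV : ∀ l, l + 1 ≤ n →
        ∃ v : Equiv.Perm (Fin n),
          (∀ i : Fin n, (v i : ℕ) = if (i:ℕ) ≤ l then l - (i:ℕ) else (i:ℕ)) ∧
          Kle σ τ v ((2*(l*l) + 3*l)/2 - l%2) := by
      intro l
      induction l using Nat.strong_induction_on with
      | _ l ih =>
        intro hln
        match l, ih, hln with
        | 0, ih, hln =>
          refine ⟨1, fun i => ?_, kle_mono (kle_one σ τ) (by omega)⟩
          simp only [Equiv.Perm.one_apply]
          have := i.2
          split_ifs <;> omega
        | 1, ih, hln =>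
          refine ⟨τ, fun i => ?_, kle_mono (kle_tau σ τ) (by omega)⟩
          have e := hτ i
          have := i.2
          split_ifs at e ⊢ <;> omega
        | (m+2), ih, hln => ?_
        obtain ⟨a, ha, hka⟩ := exA (m+2) (by omega) (by omega)
        obtain ⟨v, hv, hkv⟩ := ih m (by omega) (by omega)
        refine ⟨a * σ * v * σ⁻¹, fun i => ?_, ?_⟩
        · simp only [Equiv.Perm.mul_apply]
          have bi := i.2
          have e1 := hsi i
          have b1 := (σ⁻¹ i).2
          have e2 := hv (σ⁻¹ i)
          have b2 := (v (σ⁻¹ i)).2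
          have e3 := hs (v (σ⁻¹ i))
          have b3 := (σ (v (σ⁻¹ i))).2
          have e4 := ha (σ (v (σ⁻¹ i)))
          split_ifs at e1 e2 e3 e4 ⊢ <;> omega
        · have h := kle_mul (kle_mul (kle_mul hka (kle_sigma σ τ)) hkv) (kle_sigma_inv σ τ)
          refine kle_mono h ?_
          have hq : (m+2)*(m+2) = m*m + 4*m + 4 := by ring
          generalize hx : m*m = x at hq ⊢
          generalize hy : (m+2)*(m+2) = y at hq ⊢
          clear hx hy
          subst hq
          rcases Nat.even_or_odd' m with ⟨k, rfl | rfl⟩ <;> omega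
    obtain ⟨t, ht⟩ : ∃ t, t = (n+1)/4 := ⟨_, rfl⟩
    obtain ⟨v1, hv1, hkv1⟩ := exV (2*t-1) (by omega)
    obtain ⟨v2, hv2, hkv2⟩ := exV (n-1-2*t) (by omega)
    have hPi : ∀ i : Fin n,
        ((σ ^ (n-t) * v1 * σ ^ (2*t) * v2 * σ ^ (n-t)) i : ℕ) = (R i : ℕ) := by
      intro i
      simp only [Equiv.Perm.mul_apply]
      have bi := i.2
      have e0 := hpow (n-t) (by omega) i
      have b0 := ((σ ^ (n-t)) i).2
      have e1 := hv2 ((σ ^ (n-t)) i)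
      have b1 := (v2 ((σ ^ (n-t)) i)).2
      have e2 := hpow (2*t) (by omega) (v2 ((σ ^ (n-t)) i))
      have b2 := ((σ ^ (2*t)) (v2 ((σ ^ (n-t)) i))).2
      have e3 := hv1 ((σ ^ (2*t)) (v2 ((σ ^ (n-t)) i)))
      have b3 := (v1 ((σ ^ (2*t)) (v2 ((σ ^ (n-t)) i)))).2
      have e4 := hpow (n-t) (by omega) (v1 ((σ ^ (2*t)) (v2 ((σ ^ (n-t)) i))))
      have e5 := hR i
      rw [e5]
      split_ifs at e0 e1 e2 e3 e4 <;> omega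
    have hPR : (σ ^ (n-t) * v1 * σ ^ (2*t) * v2 * σ ^ (n-t)) = R :=
      Equiv.ext fun i => Fin.val_injective (hPi i)
    have hKP := kle_mul (kle_mul (kle_mul (kle_mul (kle_pow σ τ (n-t)) hkv1)
      (kle_pow σ τ (2*t))) hkv2) (kle_pow σ τ (n-t))
    rw [hPR] at hKP
    have hB := costBound n t (by omega) ht
    obtain ⟨gs, hlen, hmem, hprod⟩ := hKP
    refine ⟨gs.length, ?_, gs, rfl, hmem, hprod⟩
    calc 4 * gs.length ≤ 4 * ((n - t) + ((2*((2*t-1)*(2*t-1)) + 3*(2*t-1))/2 - (2*t-1)%2) + 2*t +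
          ((2*((n-1-2*t)*(n-1-2*t)) + 3*(n-1-2*t))/2 - (n-1-2*t)%2) + (n - t)) :=
        Nat.mul_le_mul (le_refl 4) hlen
      _ ≤ 3 * n ^ 2 := hB
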